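/- arXiv:1903.09352 — 2 statements merged into one kernel-verified Lean document; each statement's English description precedes it below -/
import Mathlib

section
/- For any bound N_0, there exists an integer N ≥ N_0 and a set A ⊆ [N] with |A| ≥ N/2 such that R_2(A) ≤ 16·(log N / log log N)² and C(A) ≤ 24·(log N / log log N)³, where log denotes the natural logarithm. -/
open scoped Classical Pointwise

/-- `a` and `b` are consecutive elements of the finite set `A` of integers. -/
def ConsecIn (A : Finset ℤ) (a b : ℤ) : Prop :=
  a ∈ A ∧ b ∈ A ∧ a < b ∧ ∀ c ∈ A, c ≤ a ∨ b ≤ c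

/-- `A` is `L`-regular: some real `X > 0` bounds all consecutive gaps between `X` and `L*X`. -/
def IsRegularSet (L : ℝ) (A : Finset ℤ) : Prop :=
  ∃ X : ℝ, 0 < X ∧ ∀ a b : ℤ, ConsecIn A a b →
    X ≤ (b : ℝ) - (a : ℝ) ∧ (b : ℝ) - (a : ℝ) ≤ L * X

/-- `R_L(A)`: the maximum cardinality of an `L`-regular subset of `A`. -/
noncomputable def regMax (L : ℝ) (A : Finset ℤ) : ℕ :=
  (A.powerset.filter fun B => IsRegularSet L B).sup Finset.card

/-- `A` is strictly convex: the consecutive differences of its increasing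
enumeration are strictly increasing. -/
def IsConvexSet (A : Finset ℤ) : Prop :=
  ∀ a b c : ℤ, ConsecIn A a b → ConsecIn A b c → b - a < c - b

/-- `C(A)`: the maximum cardinality of a strictly convex subset of `A`. -/
noncomputable def convMax (A : Finset ℤ) : ℕ :=
  (A.powerset.filter fun B => IsConvexSet B).sup Finset.card

open Finset

/-- The good set: integers in `[1, b^D]` none of whose base-`b` digits in
positions `< D` equals `b-1`. -/
noncomputable def st11A (b D : ℕ) : Finset ℤ :=
  (Finset.Icc 1 ((b:ℤ)^D)).filter fun n => ∀ k < D, n / (b:ℤ)^k % (b:ℤ) ≠ (b:ℤ) - 1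

lemma st11A_subset (b D : ℕ) : st11A b D ⊆ Finset.Icc 1 ((b:ℤ)^D) :=
  Finset.filter_subset _ _

lemma st11_bad_card (b D k : ℕ) (hb : 2 ≤ b) (hk : k < D) :
    ((Finset.Icc 1 ((b:ℤ)^D)).filter
      fun n => n / (b:ℤ)^k % (b:ℤ) = (b:ℤ) - 1).card ≤ b^(D-1) := by
  classical
  set bz : ℤ := (b:ℤ) with hbz
  have hbz2 : (2:ℤ) ≤ bz := by rw [hbz]; exact_mod_cast hb
  have hbpos : (0:ℤ) < bz := by linarith
  have hpk : (0:ℤ) < bz^k := pow_pos hbpos k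
  have hpk1 : (0:ℤ) < bz^(k+1) := pow_pos hbpos (k+1)
  have hid : ∀ n : ℤ, n = bz^(k+1) * (n / bz^k / bz) + bz^k * (n / bz^k % bz) + n % bz^k := by
    intro n
    have e1 : n % bz^k + bz^k * (n / bz^k) = n := Int.emod_add_mul_ediv n (bz^k)
    have e2 : (n / bz^k) % bz + bz * (n / bz^k / bz) = n / bz^k := Int.emod_add_mul_ediv _ bz
    rw [pow_succ]
    linear_combination (-1 : ℤ) * e1 - bz^k * e2
  set φ : ℤ → ℤ := fun n => (n / bz^k / bz) * bz^k + n % bz^k with hφ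
  -- recovering q and r from φ n
  have hrecq : ∀ n : ℤ, 0 ≤ n → φ n / bz^k = n / bz^k / bz := by
    intro n hn
    have hq0 : 0 ≤ n / bz^k / bz :=
      Int.ediv_nonneg (Int.ediv_nonneg hn (le_of_lt hpk)) (le_of_lt hbpos)
    have hr0 : 0 ≤ n % bz^k := Int.emod_nonneg n (ne_of_gt hpk)
    have hrlt : n % bz^k < bz^k := Int.emod_lt_of_pos n hpk
    have : φ n = n % bz^k + (n / bz^k / bz) * bz^k := by rw [hφ]; ring
    rw [this, Int.add_mul_ediv_right _ _ (ne_of_gt hpk),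
      Int.ediv_eq_zero_of_lt hr0 hrlt, zero_add]
  have hrecr : ∀ n : ℤ, φ n % bz^k = n % bz^k := by
    intro n
    have : φ n = n % bz^k + (n / bz^k / bz) * bz^k := by rw [hφ]; ring
    rw [this, Int.add_mul_emod_self_right, Int.emod_emod_of_dvd _ dvd_rfl]
  have key : ∀ n ∈ (Finset.Icc 1 (bz^D)).filter
      (fun n => n / bz^k % bz = bz - 1), φ n ∈ Finset.Icc (0:ℤ) (bz^(D-1) - 1) := by
    intro n hn
    rw [mem_filter, mem_Icc] at hn
    obtain ⟨⟨hn1, hn2⟩, hdig⟩ := hn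
    have hn0 : (0:ℤ) ≤ n := by linarith
    have hnlt : n < bz^D := by
      rcases lt_or_eq_of_le hn2 with h | h
      · exact h
      · exfalso
        have h1 : bz^D / bz^k = bz^(D-k) := by
          have h2 : bz^D = bz^k * bz^(D-k) := by
            rw [← pow_add]; congr 1; omega
          rw [h2, Int.mul_ediv_cancel_left _ (ne_of_gt hpk)]
        have h3 : bz^(D-k) % bz = 0 := by
          exact Int.emod_eq_zero_of_dvd (dvd_pow_self bz (by omega : D - k ≠ 0))
        rw [h, h1, h3] at hdig
        omega
    have hq0 : 0 ≤ n / bz^k / bz :=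
      Int.ediv_nonneg (Int.ediv_nonneg hn0 (le_of_lt hpk)) (le_of_lt hbpos)
    have hr0 : 0 ≤ n % bz^k := Int.emod_nonneg n (ne_of_gt hpk)
    have hrlt : n % bz^k < bz^k := Int.emod_lt_of_pos n hpk
    have hqlt : n / bz^k / bz < bz^(D-k-1) := by
      by_contra hcon
      push_neg at hcon
      have h4 : bz^(k+1) * bz^(D-k-1) ≤ bz^(k+1) * (n / bz^k / bz) :=
        mul_le_mul_of_nonneg_left hcon (le_of_lt hpk1)
      have h5 : bz^(k+1) * bz^(D-k-1) = bz^D := by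
        rw [← pow_add]; congr 1; omega
      have h6 := hid n
      rw [hdig] at h6
      have hnn : (0:ℤ) ≤ bz^k * (bz - 1) := mul_nonneg (le_of_lt hpk) (by linarith)
      linarith
    have hbd : φ n ≤ bz^(D-1) - 1 := by
      have h7 : n / bz^k / bz ≤ bz^(D-k-1) - 1 := by omega
      have h8 : (n / bz^k / bz) * bz^k ≤ (bz^(D-k-1) - 1) * bz^k :=
        mul_le_mul_of_nonneg_right h7 (le_of_lt hpk)
      have h9 : bz^(D-k-1) * bz^k = bz^(D-1) := by
        rw [← pow_add]; congr 1; omega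
      have : φ n = (n / bz^k / bz) * bz^k + n % bz^k := rfl
      nlinarith
    rw [mem_Icc]
    constructor
    · have : (0:ℤ) ≤ (n / bz^k / bz) * bz^k := mul_nonneg hq0 (le_of_lt hpk)
      have h10 : φ n = (n / bz^k / bz) * bz^k + n % bz^k := rfl
      linarith
    · exact hbd
  have hinj : Set.InjOn φ ((Finset.Icc 1 (bz^D)).filter
      (fun n => n / bz^k % bz = bz - 1)) := by
    intro n1 h1 n2 h2 heq
    rw [Finset.coe_filter, Set.mem_setOf_eq] at h1 h2
    obtain ⟨h1m, h1d⟩ := h1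
    obtain ⟨h2m, h2d⟩ := h2
    rw [mem_Icc] at h1m h2m
    have h1n0 : (0:ℤ) ≤ n1 := by linarith [h1m.1]
    have h2n0 : (0:ℤ) ≤ n2 := by linarith [h2m.1]
    have hq : n1 / bz^k / bz = n2 / bz^k / bz := by
      rw [← hrecq n1 h1n0, ← hrecq n2 h2n0, heq]
    have hr : n1 % bz^k = n2 % bz^k := by
      rw [← hrecr n1, ← hrecr n2, heq]
    have e1 := hid n1
    have e2 := hid n2
    rw [h1d] at e1
    rw [h2d] at e2
    rw [e1, e2, hq, hr]
  have hcard := Finset.card_le_card_of_injOn φ key hinj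
  have : (Finset.Icc (0:ℤ) (bz^(D-1) - 1)).card = b^(D-1) := by
    rw [Int.card_Icc]
    have : bz^(D-1) - 1 + 1 - 0 = ((b^(D-1) : ℕ) : ℤ) := by push_cast [hbz]; ring
    rw [this, Int.toNat_natCast]
  omega

lemma st11A_def (b D : ℕ) : st11A b D =
    (Finset.Icc 1 ((b:ℤ)^D)).filter (fun n => ∀ k < D, n / (b:ℤ)^k % (b:ℤ) ≠ (b:ℤ) - 1) := rfl

lemma st11_card (b D : ℕ) (hb : 2 ≤ b) (hD : 1 ≤ D) :
    b^D ≤ (st11A b D).card + D * b^(D-1) := by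
  classical
  set bz : ℤ := (b:ℤ) with hbz
  set bad : ℕ → Finset ℤ := fun k => (Finset.Icc 1 (bz^D)).filter
      (fun n => n / bz^k % bz = bz - 1) with hbad
  have hcover : Finset.Icc (1:ℤ) (bz^D) ⊆ st11A b D ∪ (Finset.range D).biUnion bad := by
    intro n hn
    rw [Finset.mem_union]
    by_cases hgood : ∀ k < D, n / bz^k % bz ≠ bz - 1
    · left; rw [st11A_def, mem_filter]; exact ⟨hn, hgood⟩
    · right
      push_neg at hgood
      obtain ⟨k, hk, hkd⟩ := hgood
      rw [Finset.mem_biUnion]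
      exact ⟨k, Finset.mem_range.mpr hk, by rw [hbad]; exact mem_filter.mpr ⟨hn, hkd⟩⟩
  have h1 : (Finset.Icc (1:ℤ) (bz^D)).card = b^D := by
    rw [Int.card_Icc]
    have : bz^D + 1 - 1 = ((b^D : ℕ) : ℤ) := by push_cast [hbz]; ring
    rw [this, Int.toNat_natCast]
  have h2 : (st11A b D ∪ (Finset.range D).biUnion bad).card ≤
      (st11A b D).card + D * b^(D-1) := by
    refine le_trans (Finset.card_union_le _ _) ?_
    have h3 : ((Finset.range D).biUnion bad).card ≤ D * b^(D-1) := by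
      refine le_trans Finset.card_biUnion_le ?_
      refine le_trans (Finset.sum_le_card_nsmul _ _ (b^(D-1)) ?_) ?_
      · intro k hk
        exact st11_bad_card b D k hb (Finset.mem_range.mp hk)
      · simp [Finset.card_range, smul_eq_mul]
    omega
  have := Finset.card_le_card hcover
  omega

/-- Trapping lemma: if all consecutive gaps of `B ⊆ A` are at most `b^k` with
`k < D`, then `B` is trapped between two forbidden blocks at scale `k`. -/
lemma st11_trap (b D : ℕ) (hb : 2 ≤ b) {k : ℕ} (hk : k < D) {B : Finset ℤ}
    (hBA : B ⊆ st11A b D)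
    (hgap : ∀ a c : ℤ, ConsecIn B a c → c - a ≤ (b:ℤ)^k)
    {a0 a1 : ℤ} (h0 : a0 ∈ B) (h1 : a1 ∈ B) :
    a1 - a0 ≤ (b:ℤ)^(k+1) + (b:ℤ)^k + 1 := by
  classical
  set bz : ℤ := (b:ℤ) with hbz
  have hbz2 : (2:ℤ) ≤ bz := by rw [hbz]; exact_mod_cast hb
  have hbpos : (0:ℤ) < bz := by linarith
  have hpk : (0:ℤ) < bz^k := pow_pos hbpos k
  set P : ℤ := bz^(k+1) with hP
  have hPpos : (0:ℤ) < P := pow_pos hbpos (k+1)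
  have hPk : P = bz * bz^k := by rw [hP, pow_succ]; ring
  by_contra hcon
  push_neg at hcon
  have hcon' : bz^(k+1) + bz^k + 2 ≤ a1 - a0 := by omega
  -- construct the forbidden block start t
  set X0 : ℤ := (bz - 1) * bz^k - (a0 + 1) with hX0
  set t : ℤ := a0 + 1 + X0 % P with ht
  have ht1 : a0 < t := by
    have := Int.emod_nonneg X0 (ne_of_gt hPpos)
    omega
  have ht2 : t ≤ a0 + P := by
    have := Int.emod_lt_of_pos X0 hPpos
    omega
  have htm : t % P = (bz - 1) * bz^k := by
    have e1 : t = (a0 + 1) + X0 + P * (-(X0 / P)) := by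
      have := Int.emod_add_mul_ediv X0 P
      rw [ht]; linarith
    have e2 : t % P = ((a0 + 1) + X0) % P := by
      rw [e1, Int.add_mul_emod_self_left]
    have e3 : (a0 + 1) + X0 = (bz - 1) * bz^k := by rw [hX0]; ring
    rw [e2, e3]
    refine Int.emod_eq_of_lt ?_ ?_
    · exact mul_nonneg (by linarith) (le_of_lt hpk)
    · rw [hPk]; nlinarith
  set q : ℤ := t / P with hq
  have hqt : t = P * q + (bz - 1) * bz^k := by
    have h := Int.emod_add_mul_ediv t P
    rw [htm] at h
    rw [hq]
    linarith
  -- digit of anything in the block [t, t + bz^k) at position k equals bz - 1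
  have hdigit : ∀ c : ℤ, t ≤ c → c < t + bz^k → c / bz^k % bz = bz - 1 := by
    intro c hc1 hc2
    have e1 : c = (c - t) + bz^k * (bz * q + (bz - 1)) := by
      rw [hqt, hPk]; ring
    have e2 : c / bz^k = bz * q + (bz - 1) := by
      rw [e1, Int.add_mul_ediv_left _ _ (ne_of_gt hpk),
        Int.ediv_eq_zero_of_lt (by linarith) (by linarith), zero_add]
    rw [e2]
    have e3 : bz * q + (bz - 1) = (bz - 1) + bz * q := by ring
    rw [e3, Int.add_mul_emod_self_left]
    exact Int.emod_eq_of_lt (by linarith) (by linarith)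
  -- the element of B just below t and its successor
  obtain ⟨a, haB, hat, hamax⟩ : ∃ a, a ∈ B ∧ a < t ∧ ∀ x ∈ B, x < t → x ≤ a := by
    have hne1 : (B.filter (fun y => y < t)).Nonempty := ⟨a0, mem_filter.mpr ⟨h0, ht1⟩⟩
    refine ⟨(B.filter (fun y => y < t)).max' hne1, ?_, ?_, ?_⟩
    · exact (mem_filter.mp (Finset.max'_mem _ hne1)).1
    · exact (mem_filter.mp (Finset.max'_mem _ hne1)).2
    · intro x hx hxt
      exact Finset.le_max' (B.filter (fun y => y < t)) x (mem_filter.mpr ⟨hx, hxt⟩)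
  have ha1 : a < a1 := by
    have h4 : (0:ℤ) < bz^k := hpk
    omega
  obtain ⟨c, hcB, hac, hcmin⟩ : ∃ c, c ∈ B ∧ a < c ∧ ∀ x ∈ B, a < x → c ≤ x := by
    have hne2 : (B.filter (fun y => a < y)).Nonempty := ⟨a1, mem_filter.mpr ⟨h1, ha1⟩⟩
    refine ⟨(B.filter (fun y => a < y)).min' hne2, ?_, ?_, ?_⟩
    · exact (mem_filter.mp (Finset.min'_mem _ hne2)).1
    · exact (mem_filter.mp (Finset.min'_mem _ hne2)).2
    · intro x hx hax
      exact Finset.min'_le (B.filter (fun y => a < y)) x (mem_filter.mpr ⟨hx, hax⟩)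
  have hconsec : ConsecIn B a c := by
    refine ⟨haB, hcB, hac, ?_⟩
    intro x hx
    by_cases hxa : x ≤ a
    · exact Or.inl hxa
    · exact Or.inr (hcmin x hx (by omega))
  have hct : t ≤ c := by
    by_contra hct
    push_neg at hct
    have hca : c ≤ a := hamax c hcB hct
    omega
  -- c is not in the forbidden block
  have hcblock : ¬ (c < t + bz^k) := by
    intro hcc
    have hd := hdigit c hct hcc
    have hcA := hBA hcB
    rw [st11A_def, mem_filter] at hcA
    exact hcA.2 k hk hd
  push_neg at hcblock
  have := hgap a c hconsec
  omega

lemma st11_pairwise_sep {B : Finset ℤ} {X : ℝ}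
    (hsep : ∀ a c : ℤ, ConsecIn B a c → X ≤ (c:ℝ) - (a:ℝ)) :
    ∀ a ∈ B, ∀ c ∈ B, a < c → X ≤ (c:ℝ) - (a:ℝ) := by
  classical
  intro a ha c hc hac
  obtain ⟨c', hc'B, hac', hc'min⟩ : ∃ c', c' ∈ B ∧ a < c' ∧ ∀ x ∈ B, a < x → c' ≤ x := by
    have hne : (B.filter (fun y => a < y)).Nonempty := ⟨c, mem_filter.mpr ⟨hc, hac⟩⟩
    refine ⟨(B.filter (fun y => a < y)).min' hne, ?_, ?_, ?_⟩
    · exact (mem_filter.mp (Finset.min'_mem _ hne)).1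
    · exact (mem_filter.mp (Finset.min'_mem _ hne)).2
    · intro x hx hax
      exact Finset.min'_le (B.filter (fun y => a < y)) x (mem_filter.mpr ⟨hx, hax⟩)
  have hcons : ConsecIn B a c' := by
    refine ⟨ha, hc'B, hac', ?_⟩
    intro x hx
    by_cases hxa : x ≤ a
    · exact Or.inl hxa
    · exact Or.inr (hc'min x hx (by omega))
  have h1 := hsep a c' hcons
  have h2 : c' ≤ c := hc'min c hc hac
  have h3 : ((c':ℤ):ℝ) ≤ ((c:ℤ):ℝ) := by exact_mod_cast h2
  linarith

lemma st11_sep_card {B : Finset ℤ} (hne : B.Nonempty) {X : ℝ} (hX : 0 < X)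
    (hsep : ∀ a c : ℤ, ConsecIn B a c → X ≤ (c:ℝ) - (a:ℝ)) :
    (B.card : ℝ) ≤ (((B.max' hne : ℤ) : ℝ) - ((B.min' hne : ℤ) : ℝ)) / X + 1 := by
  classical
  have hpair := st11_pairwise_sep hsep
  set m : ℤ := B.min' hne with hm
  set M : ℤ := B.max' hne with hM
  set φ : ℤ → ℕ := fun n => ⌊((n : ℝ) - (m : ℝ)) / X⌋₊ with hφ
  have hflo : ∀ n ∈ B, (φ n : ℝ) ≤ ((n:ℝ) - (m:ℝ)) / X := by
    intro n hn
    apply Nat.floor_le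
    apply div_nonneg ?_ (le_of_lt hX)
    have : m ≤ n := Finset.min'_le _ _ hn
    have : (m:ℝ) ≤ (n:ℝ) := by exact_mod_cast this
    linarith
  have hmono : ∀ n1 ∈ B, ∀ n2 ∈ B, n1 < n2 → φ n1 < φ n2 := by
    intro n1 h1 n2 h2 h12
    have hs : X ≤ (n2:ℝ) - (n1:ℝ) := hpair n1 h1 n2 h2 h12
    have e1 : (φ n1 : ℝ) ≤ ((n1:ℝ) - (m:ℝ)) / X := hflo n1 h1
    have e2 : ((φ n1 : ℕ) : ℝ) + 1 ≤ ((n2:ℝ) - (m:ℝ)) / X := by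
      have : ((n1:ℝ) - (m:ℝ)) / X + 1 ≤ ((n2:ℝ) - (m:ℝ)) / X := by
        rw [div_add' _ _ _ (ne_of_gt hX)]
        gcongr
        linarith
      linarith
    have : (φ n1 : ℕ) + 1 ≤ φ n2 := by
      apply Nat.le_floor
      exact_mod_cast e2
    omega
  have hinj : Set.InjOn φ (B : Set ℤ) := by
    intro n1 h1 n2 h2 heq
    by_contra hne12
    rcases lt_or_gt_of_ne hne12 with h | h
    · exact absurd heq (Nat.ne_of_lt (hmono n1 h1 n2 h2 h))
    · exact absurd heq.symm (Nat.ne_of_lt (hmono n2 h2 n1 h1 h))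
  have hmem : ∀ n ∈ B, φ n ∈ Finset.range (⌊((M:ℝ) - (m:ℝ)) / X⌋₊ + 1) := by
    intro n hn
    rw [Finset.mem_range, Nat.lt_succ_iff]
    apply Nat.floor_mono
    have h1 : n ≤ M := Finset.le_max' _ n hn
    have h1' : (n:ℝ) ≤ (M:ℝ) := by exact_mod_cast h1
    gcongr
  have hcard := Finset.card_le_card_of_injOn φ hmem hinj
  rw [Finset.card_range] at hcard
  have h2 : (⌊((M:ℝ) - (m:ℝ)) / X⌋₊ : ℝ) ≤ ((M:ℝ) - (m:ℝ)) / X := by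
    apply Nat.floor_le
    apply div_nonneg ?_ (le_of_lt hX)
    have : m ≤ M := Finset.min'_le _ _ (Finset.max'_mem _ hne)
    have : (m:ℝ) ≤ (M:ℝ) := by exact_mod_cast this
    linarith
  have h3 : (B.card : ℝ) ≤ (⌊((M:ℝ) - (m:ℝ)) / X⌋₊ : ℝ) + 1 := by exact_mod_cast hcard
  linarith

lemma st11_reg (b D : ℕ) (hb : 2 ≤ b) (hD : 1 ≤ D) {B : Finset ℤ}
    (hBA : B ⊆ st11A b D) (hreg : IsRegularSet 2 B) :
    B.card ≤ 2*b^2 + 2*b + 2 := by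
  classical
  obtain ⟨X, hX, hXg⟩ := hreg
  rcases B.eq_empty_or_nonempty with hBe | hne
  · simp [hBe]
  -- upgrade X to Y ≥ 1
  set Y : ℝ := max X 1 with hY
  have hY1 : (1:ℝ) ≤ Y := le_max_right _ _
  have hYpos : (0:ℝ) < Y := by linarith
  have hgapl : ∀ a c : ℤ, ConsecIn B a c → Y ≤ (c:ℝ) - (a:ℝ) := by
    intro a c hcons
    apply max_le (hXg a c hcons).1
    have : a + 1 ≤ c := hcons.2.2.1
    have : ((a:ℝ) + 1) ≤ (c:ℝ) := by exact_mod_cast this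
    linarith
  have hgapu : ∀ a c : ℤ, ConsecIn B a c → (c:ℝ) - (a:ℝ) ≤ 2 * Y := by
    intro a c hcons
    have h1 := (hXg a c hcons).2
    have : X ≤ Y := le_max_left _ _
    linarith
  set m : ℤ := B.min' hne with hm
  set M : ℤ := B.max' hne with hM
  have hsepc := st11_sep_card hne hYpos hgapl
  have hmB : m ∈ B := Finset.min'_mem _ hne
  have hMB : M ∈ B := Finset.max'_mem _ hne
  have hcard1 : ((B.card : ℝ) - 1) * Y ≤ (M:ℝ) - (m:ℝ) := by
    have h2 : ((B.card : ℝ) - 1) ≤ ((M:ℝ) - (m:ℝ)) / Y := by linarith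
    exact (le_div_iff₀ hYpos).mp h2
  have hbR : (2:ℝ) ≤ (b:ℝ) := by exact_mod_cast hb
  by_cases hcase : 2*Y ≤ ((b:ℝ))^(D-1)
  · -- find the minimal scale k
    have hex : ∃ k : ℕ, 2*Y ≤ (b:ℝ)^k := ⟨D-1, hcase⟩
    set k : ℕ := Nat.find hex with hkdef
    have hkspec : 2*Y ≤ (b:ℝ)^k := Nat.find_spec hex
    have hkD : k ≤ D - 1 := Nat.find_min' hex hcase
    have hkD' : k < D := by omega
    have hk0 : k ≠ 0 := by
      intro h0
      rw [h0] at hkspec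
      simp at hkspec
      linarith
    have hklt : (b:ℝ)^(k-1) < 2*Y := by
      have := Nat.find_min hex (show k - 1 < k by omega)
      linarith [not_le.mp this]
    have hgapz : ∀ a c : ℤ, ConsecIn B a c → c - a ≤ (b:ℤ)^k := by
      intro a c hcons
      have h1 := hgapu a c hcons
      have h2 : ((c - a : ℤ) : ℝ) ≤ (((b:ℤ)^k : ℤ) : ℝ) := by push_cast; linarith
      exact_mod_cast h2
    have htrap := st11_trap b D hb hkD' hBA hgapz hmB hMB
    have htrapR : (M:ℝ) - (m:ℝ) ≤ (b:ℝ)^(k+1) + (b:ℝ)^k + 1 := by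
      have : ((M - m : ℤ) : ℝ) ≤ (((b:ℤ)^(k+1) + (b:ℤ)^k + 1 : ℤ) : ℝ) := by
        exact_mod_cast htrap
      push_cast at this
      linarith
    have e1 : (b:ℝ)^(k+1) = (b:ℝ)^2 * (b:ℝ)^(k-1) := by
      rw [← pow_add]; congr 1; omega
    have e2 : (b:ℝ)^k = (b:ℝ) * (b:ℝ)^(k-1) := by
      rw [← pow_succ']; congr 1; omega
    have hfin : ((B.card : ℝ) - 1) * Y ≤ (2*(b:ℝ)^2 + 2*(b:ℝ) + 1) * Y := by
      have hb2 : (0:ℝ) ≤ (b:ℝ)^2 := sq_nonneg _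
      nlinarith
    have hfin2 : (B.card : ℝ) - 1 ≤ 2*(b:ℝ)^2 + 2*(b:ℝ) + 1 :=
      le_of_mul_le_mul_right hfin hYpos
    have : (B.card : ℝ) ≤ ((2*b^2 + 2*b + 2 : ℕ) : ℝ) := by push_cast; linarith
    exact_mod_cast this
  · push_neg at hcase
    have hIcc : ∀ x ∈ B, 1 ≤ x ∧ x ≤ (b:ℤ)^D := by
      intro x hx
      have := hBA hx
      rw [st11A_def, mem_filter, mem_Icc] at this
      exact this.1
    have h1 : (M:ℝ) - (m:ℝ) ≤ ((b:ℝ))^D - 1 := by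
      have h2 := (hIcc m hmB).1
      have h3 := (hIcc M hMB).2
      have h2' : (1:ℝ) ≤ (m:ℝ) := by exact_mod_cast h2
      have h3' : (M:ℝ) ≤ (((b:ℤ)^D : ℤ) : ℝ) := by exact_mod_cast h3
      push_cast at h3'
      linarith
    have e2 : (b:ℝ)^D = (b:ℝ) * (b:ℝ)^(D-1) := by
      rw [← pow_succ']; congr 1; omega
    have hfin : ((B.card : ℝ) - 1) * Y < (2*(b:ℝ)) * Y := by nlinarith
    have hfin2 : (B.card : ℝ) - 1 < 2*(b:ℝ) :=
      lt_of_mul_lt_mul_right hfin (le_of_lt hYpos)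
    have : (B.card : ℝ) < ((2*b + 1 : ℕ) : ℝ) := by push_cast; linarith
    have h4 : B.card < 2*b + 1 := by exact_mod_cast this
    nlinarith

lemma st11_conv (b D : ℕ) (hb : 2 ≤ b) (hD : 2 ≤ D) {B : Finset ℤ}
    (hBA : B ⊆ st11A b D) (hconv : IsConvexSet B) :
    B.card ≤ (D-1)*(b^2+b+1) + b + 1 := by
  classical
  set bz : ℤ := (b:ℤ) with hbz
  have hbz2 : (2:ℤ) ≤ bz := by rw [hbz]; exact_mod_cast hb
  have hbpos : (0:ℤ) < bz := by linarith
  set mm : ℕ := B.card with hmm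
  rcases Nat.lt_or_ge mm 2 with hm2 | hm2
  · omega
  -- the increasing enumeration
  set emb := B.orderEmbOfFin (rfl : B.card = mm) with hemb
  set g : ℕ → ℤ := fun i => if h : i < mm then emb ⟨i, h⟩ else 0 with hg
  have hg_mem : ∀ {i : ℕ}, i < mm → g i ∈ B := by
    intro i hi
    rw [hg]
    simp only [dif_pos hi]
    exact Finset.orderEmbOfFin_mem B _ _
  have hg_lt : ∀ {i j : ℕ}, i < j → j < mm → g i < g j := by
    intro i j hij hj
    have hi : i < mm := lt_trans hij hj
    rw [hg]
    simp only [dif_pos hi, dif_pos hj]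
    exact emb.strictMono (by exact hij)
  have hg_le : ∀ {i j : ℕ}, i ≤ j → j < mm → g i ≤ g j := by
    intro i j hij hj
    rcases Nat.lt_or_ge i j with h | h
    · exact le_of_lt (hg_lt h hj)
    · have : i = j := by omega
      rw [this]
  have hg_surj : ∀ a ∈ B, ∃ i, i < mm ∧ g i = a := by
    intro a ha
    have : a ∈ Set.range emb := by
      rw [Finset.range_orderEmbOfFin]
      exact_mod_cast ha
    obtain ⟨⟨i, hi⟩, hia⟩ := this
    exact ⟨i, hi, by rw [hg]; simp only [dif_pos hi]; exact (dif_pos hi).trans hia⟩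
  have hg_reflect : ∀ {i j : ℕ}, i < mm → j < mm → g i < g j → i < j := by
    intro i j hi hj hgij
    by_contra hcon
    push_neg at hcon
    have := hg_le hcon hi
    omega
  -- consecutive pairs
  have hcons : ∀ i : ℕ, i + 1 < mm → ConsecIn B (g i) (g (i+1)) := by
    intro i hi
    refine ⟨hg_mem (by omega), hg_mem hi, hg_lt (by omega) hi, ?_⟩
    intro x hx
    obtain ⟨j, hj, hjx⟩ := hg_surj x hx
    rcases Nat.lt_or_ge j (i+1) with h | h
    · left; rw [← hjx]; exact hg_le (by omega) (by omega)
    · right; rw [← hjx]; exact hg_le h hj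
  have hcons' : ∀ a c : ℤ, ConsecIn B a c → ∃ j, j + 1 < mm ∧ g j = a ∧ g (j+1) = c := by
    intro a c hc
    obtain ⟨ha, hcB, hac, hbetween⟩ := hc
    obtain ⟨i, hi, hia⟩ := hg_surj a ha
    obtain ⟨j, hj, hjc⟩ := hg_surj c hcB
    have hij : i < j := hg_reflect hi hj (by rw [hia, hjc]; exact hac)
    have hji : j = i + 1 := by
      by_contra hcon
      have hi1 : i + 1 < mm := by omega
      have := hbetween (g (i+1)) (hg_mem hi1)
      rcases this with h | h
      · have : g i < g (i+1) := hg_lt (by omega) hi1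
        rw [hia] at this; omega
      · have : g (i+1) < g j := hg_lt (by omega) hj
        rw [hjc] at this; omega
    exact ⟨i, by omega, hia, by rw [← hji]; exact hjc⟩
  -- the difference sequence
  set d : ℕ → ℤ := fun i => g (i+1) - g i with hd
  have hd_pos : ∀ i, i + 1 < mm → 1 ≤ d i := by
    intro i hi
    have := hg_lt (show i < i+1 by omega) hi
    rw [hd]; simp; omega
  have hd_mono : ∀ i j : ℕ, i ≤ j → j + 1 < mm → d i ≤ d j := by
    intro i j hij
    induction j, hij using Nat.le_induction with
    | base => intro _; exact le_refl _
    | succ j hij ih =>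
      intro hj
      have h1 : j + 1 < mm := by omega
      have h2 := ih h1
      have h3 : d j < d (j+1) := hconv (g j) (g (j+1)) (g (j+2))
        (hcons j h1) (hcons (j+1) hj)
      omega
  -- lower bound for partial sums
  have hsum : ∀ (c : ℤ) (i j : ℕ), i ≤ j → j < mm →
      (∀ l, i ≤ l → l < j → c ≤ d l) → c * ((j:ℤ) - (i:ℤ)) ≤ g j - g i := by
    intro c i j hij
    induction j, hij using Nat.le_induction with
    | base => intro _ _; simp
    | succ j hij ih =>
      intro hj hbound
      have h1 : j < mm := by omega
      have h2 := ih h1 (fun l hl1 hl2 => hbound l hl1 (by omega))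
      have h3 : c ≤ d j := hbound j hij (by omega)
      have h4 : d j = g (j+1) - g j := rfl
      push_cast
      nlinarith
  -- the scale classes
  set cls : ℕ → Finset ℕ := fun k => (Finset.range (mm-1)).filter
      (fun i => bz^k ≤ d i ∧ d i < bz^(k+1)) with hcls
  set big : Finset ℕ := (Finset.range (mm-1)).filter (fun i => bz^(D-1) ≤ d i) with hbig
  have hIcc : ∀ x ∈ B, 1 ≤ x ∧ x ≤ bz^D := by
    intro x hx
    have := hBA hx
    rw [st11A_def, mem_filter, mem_Icc] at this
    exact this.1
  -- bound for ordinary classes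
  have hclsbound : ∀ k, k < D - 1 → (cls k).card ≤ b^2 + b + 1 := by
    intro k hkD
    rcases (cls k).eq_empty_or_nonempty with he | hne
    · rw [he]; simp
    obtain ⟨i1, hi1mem, hi1min⟩ : ∃ i1 ∈ cls k, ∀ x ∈ cls k, i1 ≤ x :=
      ⟨(cls k).min' hne, (cls k).min'_mem hne, fun x hx => (cls k).min'_le x hx⟩
    obtain ⟨i2, hi2mem, hi2max⟩ : ∃ i2 ∈ cls k, ∀ x ∈ cls k, x ≤ i2 :=
      ⟨(cls k).max' hne, (cls k).max'_mem hne, fun x hx => (cls k).le_max' x hx⟩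
    rw [hcls, mem_filter, Finset.mem_range] at hi1mem hi2mem
    obtain ⟨hi1r, hi1l, hi1u⟩ := hi1mem
    obtain ⟨hi2r, hi2l, hi2u⟩ := hi2mem
    have hi12 : i1 ≤ i2 := hi1min i2 (by rw [hcls, mem_filter]; exact ⟨Finset.mem_range.mpr hi2r, hi2l, hi2u⟩)
    have hi2m : i2 + 1 < mm := by omega
    -- the window
    set B' : Finset ℤ := B.filter (fun x => g i1 ≤ x ∧ x ≤ g (i2+1)) with hB'
    have hB'sub : B' ⊆ st11A b D := (Finset.filter_subset _ _).trans hBA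
    have hgap' : ∀ a c : ℤ, ConsecIn B' a c → c - a ≤ bz^(k+1) := by
      intro a c hc
      obtain ⟨haB', hcB', hac, hbet⟩ := hc
      rw [hB', mem_filter] at haB' hcB'
      have hconsB : ConsecIn B a c := by
        refine ⟨haB'.1, hcB'.1, hac, ?_⟩
        intro x hx
        by_cases h1 : x ≤ a
        · exact Or.inl h1
        by_cases h2 : c ≤ x
        · exact Or.inr h2
        push_neg at h1 h2
        have hxB' : x ∈ B' := by
          rw [hB', mem_filter]
          exact ⟨hx, by linarith [haB'.2.1], by linarith [hcB'.2.2]⟩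
        rcases hbet x hxB' with h | h <;> omega
      obtain ⟨j, hj, hja, hjc⟩ := hcons' a c hconsB
      have hji1 : i1 ≤ j := by
        by_contra hcon
        push_neg at hcon
        have := hg_lt hcon (by omega : i1 < mm)
        have := haB'.2.1
        omega
      have hji2 : j ≤ i2 := by
        by_contra hcon
        push_neg at hcon
        have := hg_lt (show i2 + 1 < j + 1 by omega) (by omega : j + 1 < mm)
        have := hcB'.2.2
        omega
      have h3 : d j ≤ d i2 := hd_mono j i2 hji2 hi2m
      have h4 : c - a = d j := by rw [hd, ← hja, ← hjc]
      omega
    have hmem1 : g i1 ∈ B' := by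
      rw [hB', mem_filter]
      exact ⟨hg_mem (by omega), le_refl _, hg_le (by omega) hi2m⟩
    have hmem2 : g (i2+1) ∈ B' := by
      rw [hB', mem_filter]
      exact ⟨hg_mem hi2m, hg_le (by omega) hi2m, le_refl _⟩
    have htrap := st11_trap b D hb (show k + 1 < D by omega) hB'sub hgap' hmem1 hmem2
    have hsumk : bz^k * (((i2+1 : ℕ):ℤ) - (i1:ℤ)) ≤ g (i2+1) - g i1 := by
      apply hsum (bz^k) i1 (i2+1) (by omega) hi2m
      intro l hl1 hl2
      have := hd_mono i1 l hl1 (by omega)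
      omega
    have hpk : (0:ℤ) < bz^k := pow_pos hbpos k
    have e1 : bz^(k+1+1) = bz^k * bz^2 := by rw [← pow_add]
    have e2 : bz^(k+1) = bz^k * bz := by rw [← pow_succ]
    have hx : ((i2+1 : ℕ):ℤ) - (i1:ℤ) ≤ bz^2 + bz + 1 := by
      have h5 : bz^k * (((i2+1 : ℕ):ℤ) - (i1:ℤ)) ≤ bz^k * (bz^2 + bz + 1) := by
        nlinarith
      exact le_of_mul_le_mul_left h5 hpk
    have hsubIcc : cls k ⊆ Finset.Icc i1 i2 := by
      intro x hx'
      rw [Finset.mem_Icc]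
      exact ⟨hi1min x hx', hi2max x hx'⟩
    have hcard1 : (cls k).card ≤ i2 + 1 - i1 := by
      have := Finset.card_le_card hsubIcc
      rwa [Nat.card_Icc] at this
    have hx2 : i2 + 1 - i1 ≤ b^2 + b + 1 := by
      have h6 : (((i2+1) - i1 : ℕ) : ℤ) ≤ ((b^2 + b + 1 : ℕ) : ℤ) := by
        push_cast [Nat.cast_sub (by omega : i1 ≤ i2 + 1)]
        push_cast at hx
        linarith
      exact_mod_cast h6
    omega
  -- bound for the big class
  have hbigbound : big.card ≤ b := by
    rcases big.eq_empty_or_nonempty with he | hne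
    · rw [he]; simp
    obtain ⟨i1, hi1mem, hi1min⟩ : ∃ i1 ∈ big, ∀ x ∈ big, i1 ≤ x :=
      ⟨big.min' hne, big.min'_mem hne, fun x hx => big.min'_le x hx⟩
    obtain ⟨i2, hi2mem, hi2max⟩ : ∃ i2 ∈ big, ∀ x ∈ big, x ≤ i2 :=
      ⟨big.max' hne, big.max'_mem hne, fun x hx => big.le_max' x hx⟩
    rw [hbig, mem_filter, Finset.mem_range] at hi1mem hi2mem
    obtain ⟨hi1r, hi1l⟩ := hi1mem
    obtain ⟨hi2r, hi2l⟩ := hi2mem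
    have hi12 : i1 ≤ i2 := hi1min i2 (by rw [hbig, mem_filter]; exact ⟨Finset.mem_range.mpr hi2r, hi2l⟩)
    have hi2m : i2 + 1 < mm := by omega
    have hsumk : bz^(D-1) * (((i2+1 : ℕ):ℤ) - (i1:ℤ)) ≤ g (i2+1) - g i1 := by
      apply hsum (bz^(D-1)) i1 (i2+1) (by omega) hi2m
      intro l hl1 hl2
      have := hd_mono i1 l hl1 (by omega)
      omega
    have hspan : g (i2+1) - g i1 ≤ bz^D - 1 := by
      have h1 := (hIcc (g i1) (hg_mem (by omega : i1 < mm))).1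
      have h2 := (hIcc (g (i2+1)) (hg_mem hi2m)).2
      omega
    have hpk : (0:ℤ) < bz^(D-1) := pow_pos hbpos _
    have e2 : bz^D = bz^(D-1) * bz := by rw [← pow_succ]; congr 1; omega
    have hx : ((i2+1 : ℕ):ℤ) - (i1:ℤ) < bz := by
      have h5 : bz^(D-1) * (((i2+1 : ℕ):ℤ) - (i1:ℤ)) < bz^(D-1) * bz := by nlinarith
      exact lt_of_mul_lt_mul_left h5 (le_of_lt hpk)
    have hsubIcc : big ⊆ Finset.Icc i1 i2 := by
      intro x hx'
      rw [Finset.mem_Icc]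
      exact ⟨hi1min x hx', hi2max x hx'⟩
    have hcard1 : big.card ≤ i2 + 1 - i1 := by
      have := Finset.card_le_card hsubIcc
      rwa [Nat.card_Icc] at this
    have hx2 : i2 + 1 - i1 ≤ b := by
      have h6 : (((i2+1) - i1 : ℕ) : ℤ) ≤ ((b : ℕ) : ℤ) := by
        push_cast [Nat.cast_sub (by omega : i1 ≤ i2 + 1)]
        push_cast at hx
        linarith
      exact_mod_cast h6
    omega
  -- every index lies in some class
  have hcover : Finset.range (mm-1) ⊆ ((Finset.range (D-1)).biUnion cls) ∪ big := by
    intro i hi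
    rw [Finset.mem_range] at hi
    have hip : i + 1 < mm := by omega
    have hdi := hd_pos i hip
    rw [Finset.mem_union]
    by_cases hbigcase : bz^(D-1) ≤ d i
    · right
      rw [hbig, mem_filter]
      exact ⟨Finset.mem_range.mpr hi, hbigcase⟩
    · left
      push_neg at hbigcase
      rw [hbz] at hbigcase
      set n : ℕ := (d i).toNat with hn
      have hdn : (n:ℤ) = d i := Int.toNat_of_nonneg (by omega)
      have hn1 : 1 ≤ n := by omega
      set k : ℕ := Nat.log b n with hk
      have hbk1 : b^k ≤ n := Nat.pow_log_le_self b (by omega)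
      have hbk2 : n < b^(k+1) := Nat.lt_pow_succ_log_self (by omega : 1 < b) n
      have hnlt : n < b^(D-1) := by
        have h9 : (n:ℤ) < ((b:ℕ):ℤ)^(D-1) := by omega
        exact_mod_cast h9
      have hkD : k < D - 1 := by
        by_contra hcon
        push_neg at hcon
        have := Nat.pow_le_pow_right (by omega : 1 ≤ b) hcon
        omega
      rw [Finset.mem_biUnion]
      refine ⟨k, Finset.mem_range.mpr hkD, ?_⟩
      rw [hcls, mem_filter]
      refine ⟨Finset.mem_range.mpr hi, ?_, ?_⟩
      · rw [hbz, ← hdn]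
        exact_mod_cast hbk1
      · rw [hbz, ← hdn]
        exact_mod_cast hbk2
  -- put it together
  have hfinal : mm - 1 ≤ (D-1)*(b^2+b+1) + b := by
    have h1 := Finset.card_le_card hcover
    rw [Finset.card_range] at h1
    have h2 := Finset.card_union_le ((Finset.range (D-1)).biUnion cls) big
    have h3 : ((Finset.range (D-1)).biUnion cls).card ≤ (D-1)*(b^2+b+1) := by
      refine le_trans Finset.card_biUnion_le ?_
      refine le_trans (Finset.sum_le_card_nsmul _ _ (b^2+b+1)
        (fun k hk => hclsbound k (Finset.mem_range.mp hk))) ?_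
      simp [Finset.card_range, smul_eq_mul]
    omega
  omega

/-- The key analytic estimate on `log N / log log N`. -/
lemma st11_ratio (N₀ : ℕ) :
    (3/4 : ℝ) * ((max N₀ 100000000000 : ℕ) : ℝ) ≤
      Real.log ((2 * max N₀ 100000000000)^(max N₀ 100000000000) : ℕ) /
        Real.log (Real.log ((2 * max N₀ 100000000000)^(max N₀ 100000000000) : ℕ)) ∧
    0 < Real.log (Real.log ((2 * max N₀ 100000000000)^(max N₀ 100000000000) : ℕ)) := by
  set D : ℕ := max N₀ 100000000000 with hDdef
  have hD11 : 100000000000 ≤ D := le_max_right _ _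
  have hDR : (100000000000:ℝ) ≤ (D:ℝ) := by exact_mod_cast hD11
  have hDpos : (0:ℝ) < D := by linarith
  set u : ℝ := Real.log (2*(D:ℝ)) with hu
  have h2D : (0:ℝ) < 2*(D:ℝ) := by linarith
  have hNR : (((2*D)^D : ℕ) : ℝ) = (2*(D:ℝ))^D := by push_cast; ring
  have hlogN : Real.log (((2*D)^D : ℕ) : ℝ) = (D:ℝ) * u := by
    rw [hNR, Real.log_pow]
  have hexp25 : Real.exp 25 ≤ 2*(D:ℝ) := by
    have h1 : Real.exp 25 = (Real.exp 1)^(25:ℕ) := by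
      rw [← Real.exp_nat_mul]
      norm_num
    have h2 : (Real.exp 1)^(25:ℕ) ≤ (2.7182818286:ℝ)^(25:ℕ) := by
      apply pow_le_pow_left₀ (le_of_lt (Real.exp_pos 1)) (le_of_lt Real.exp_one_lt_d9)
    have h3 : (2.7182818286:ℝ)^(25:ℕ) ≤ 2*100000000000 := by norm_num
    linarith
  have hu25 : (25:ℝ) ≤ u := by
    rw [hu, Real.le_log_iff_exp_le h2D]
    exact hexp25
  have hupos : (0:ℝ) < u := by linarith
  set s : ℝ := Real.sqrt u with hs
  have hsqu : s^2 = u := Real.sq_sqrt (le_of_lt hupos)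
  have hs0 : 0 ≤ s := Real.sqrt_nonneg u
  have hs5 : 5 ≤ s := by nlinarith
  have hspos : 0 < s := by linarith
  have hlogu : Real.log u ≤ 2*(s - 1) := by
    have h1 : Real.log s = Real.log u / 2 := Real.log_sqrt (le_of_lt hupos)
    have h2 : Real.log s ≤ s - 1 := Real.log_le_sub_one_of_pos hspos
    linarith
  have h3lu : 3 * Real.log u ≤ u - 1 := by nlinarith
  have hlog2 : Real.log 2 ≤ 1 := by
    have := Real.log_le_sub_one_of_pos (by norm_num : (0:ℝ) < 2)
    linarith
  have hlog2pos : 0 < Real.log 2 := Real.log_pos (by norm_num)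
  have hlogD : Real.log (D:ℝ) = u - Real.log 2 := by
    rw [hu, Real.log_mul (by norm_num) (ne_of_gt hDpos)]
    have : Real.log (2:ℝ) = Real.log 2 := rfl
    linarith
  have hlogupos : 0 ≤ Real.log u := Real.log_nonneg (by linarith)
  have hell : Real.log (Real.log (((2*D)^D : ℕ) : ℝ)) = Real.log (D:ℝ) + Real.log u := by
    rw [hlogN, Real.log_mul (ne_of_gt hDpos) (ne_of_gt hupos)]
  have hellpos : 0 < Real.log (Real.log (((2*D)^D : ℕ) : ℝ)) := by
    rw [hell, hlogD]
    linarith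
  have hellu : Real.log (Real.log (((2*D)^D : ℕ) : ℝ)) ≤ (4/3) * u := by
    rw [hell, hlogD]
    linarith
  constructor
  · rw [le_div_iff₀ hellpos]
    nlinarith [hlogN, mul_le_mul_of_nonneg_left hellu (by positivity : (0:ℝ) ≤ (3/4)*(D:ℝ))]
  · exact hellpos

set_option maxHeartbeats 2000000 in
/-- There are arbitrarily large `N` and a set `A ⊆ {1, …, N}` with `|A| ≥ N/2`,
`R_2(A) ≤ 16·(log N / log log N)²`, and `C(A) ≤ 24·(log N / log log N)³`. -/
theorem stmt11 (N₀ : ℕ) :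
    ∃ N : ℕ, N₀ ≤ N ∧ ∃ A : Finset ℤ, A ⊆ Finset.Icc (1 : ℤ) (N : ℤ) ∧
      (N : ℝ) / 2 ≤ (A.card : ℝ) ∧
      (regMax 2 A : ℝ) ≤ 16 * (Real.log N / Real.log (Real.log N)) ^ 2 ∧
      (convMax A : ℝ) ≤ 24 * (Real.log N / Real.log (Real.log N)) ^ 3 := by
  classical
  set D : ℕ := max N₀ 100000000000 with hDdef
  have hD11 : 100000000000 ≤ D := le_max_right _ _
  have hD0 : N₀ ≤ D := le_max_left _ _
  set b : ℕ := 2 * D with hbdef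
  have hb2 : 2 ≤ b := by omega
  set N : ℕ := b ^ D with hNdef
  have hND : N₀ ≤ N := by
    have h1 : D < 2 ^ D := Nat.lt_two_pow_self
    have h2 : 2 ^ D ≤ b ^ D := Nat.pow_le_pow_left (by omega) D
    omega
  refine ⟨N, hND, st11A b D, ?_, ?_, ?_, ?_⟩
  · -- subset of Icc
    have h1 : ((N:ℕ):ℤ) = (b:ℤ)^D := by push_cast [hNdef]; ring
    rw [h1]
    exact st11A_def b D ▸ Finset.filter_subset _ _
  · -- cardinality
    have h1 := st11_card b D hb2 (by omega)
    have h2 : 2 * (D * b^(D-1)) = b^D := by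
      have : b^D = b * b^(D-1) := by
        rw [← pow_succ']; congr 1; omega
      rw [this, hbdef]; ring
    have h3 : N ≤ 2 * (st11A b D).card := by omega
    have h4 : (N:ℝ) ≤ 2 * ((st11A b D).card : ℝ) := by exact_mod_cast h3
    linarith
  · -- regularity bound
    have hsup : regMax 2 (st11A b D) ≤ 2*b^2 + 2*b + 2 := by
      apply Finset.sup_le
      intro B hB
      rw [Finset.mem_filter, Finset.mem_powerset] at hB
      exact st11_reg b D hb2 (by omega) hB.1 hB.2
    have hcast : (regMax 2 (st11A b D) : ℝ) ≤ 8*(D:ℝ)^2 + 4*(D:ℝ) + 2 := by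
      have h1 : (regMax 2 (st11A b D) : ℝ) ≤ ((2*b^2 + 2*b + 2 : ℕ) : ℝ) := by
        exact_mod_cast hsup
      have h2 : ((2*b^2 + 2*b + 2 : ℕ) : ℝ) = 8*(D:ℝ)^2 + 4*(D:ℝ) + 2 := by
        push_cast [hbdef]; ring
      linarith
    have hr34 := st11_ratio N₀
    obtain ⟨hratio, hellpos⟩ := hr34
    set r : ℝ := Real.log N / Real.log (Real.log N) with hr
    have hDR : (5:ℝ) ≤ (D:ℝ) := by
      have : (100000000000:ℝ) ≤ (D:ℝ) := by exact_mod_cast hD11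
      linarith
    have hr0 : (0:ℝ) ≤ (3/4)*(D:ℝ) := by positivity
    have hsq : ((3/4)*(D:ℝ))^2 ≤ r^2 := by
      apply pow_le_pow_left₀ hr0 hratio
    nlinarith [hsq, hDR]
  · -- convexity bound
    have hsup : convMax (st11A b D) ≤ (D-1)*(b^2+b+1) + b + 1 := by
      apply Finset.sup_le
      intro B hB
      rw [Finset.mem_filter, Finset.mem_powerset] at hB
      exact st11_conv b D hb2 (by omega) hB.1 hB.2
    have hcast : (convMax (st11A b D) : ℝ) ≤ 4*(D:ℝ)^3 := by
      have h1 : (convMax (st11A b D) : ℝ) ≤ (((D-1)*(b^2+b+1) + b + 1 : ℕ) : ℝ) := by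
        exact_mod_cast hsup
      have h2 : (((D-1)*(b^2+b+1) + b + 1 : ℕ) : ℝ) =
          ((D:ℝ)-1)*(4*(D:ℝ)^2+2*(D:ℝ)+1) + 2*(D:ℝ) + 1 := by
        push_cast [hbdef, Nat.cast_sub (show 1 ≤ D by omega)]; ring
      have hD1 : (1:ℝ) ≤ (D:ℝ) := by
        have : (100000000000:ℝ) ≤ (D:ℝ) := by exact_mod_cast hD11
        linarith
      nlinarith
    have hr34 := st11_ratio N₀
    obtain ⟨hratio, hellpos⟩ := hr34
    set r : ℝ := Real.log N / Real.log (Real.log N) with hr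
    have hr0 : (0:ℝ) ≤ (3/4)*(D:ℝ) := by positivity
    have hcube : ((3/4)*(D:ℝ))^3 ≤ r^3 := by
      apply pow_le_pow_left₀ hr0 hratio
    nlinarith [hcube, hcast]
end

section
/- For every positive integer n, there exists a set A ⊆ [2·16^n] with |A| = 2^n such that R_2(A − A) ≤ 3 and C(A − A) ≤ 2n. -/
open scoped Classical Pointwise

namespace Stmt12Aux


def digsum (n : ℕ) (δ : ℕ → ℤ) : ℤ := ∑ i ∈ Finset.range n, δ i * 16 ^ (i + 1)

lemma digsum_sub (n : ℕ) (δ1 δ2 : ℕ → ℤ) :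
    digsum n δ1 - digsum n δ2 = digsum n (fun i => δ1 i - δ2 i) := by
  simp [digsum, sub_mul, Finset.sum_sub_distrib]

lemma geo (j : ℕ) : 15 * ∑ i ∈ Finset.range j, (16:ℤ) ^ (i+1) = 16 ^ (j+1) - 16 := by
  induction j with
  | zero => simp
  | succ j ih => rw [Finset.sum_range_succ, mul_add, ih]; ring

lemma core (n j : ℕ) (δ : ℕ → ℤ) (hb : ∀ i < n, |δ i| ≤ 2) (hj : j < n)
    (htop : ∀ i, j < i → i < n → δ i = 0) :
    digsum n δ = δ j * 16 ^ (j+1) + digsum j δ ∧ 15 * |digsum j δ| ≤ 2 * 16 ^ (j+1) := by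
  constructor
  · have h1 : digsum n δ = digsum (j+1) δ := by
      refine (Finset.sum_subset (Finset.range_subset_range.2 hj) ?_).symm
      intro i hi hni
      simp only [Finset.mem_range] at hi hni
      rw [htop i (by omega) hi]; ring
    rw [h1, digsum, Finset.sum_range_succ, add_comm]; rfl
  · have h2 : |digsum j δ| ≤ ∑ i ∈ Finset.range j, 2 * 16 ^ (i+1) := by
      refine (Finset.abs_sum_le_sum_abs _ _).trans (Finset.sum_le_sum ?_)
      intro i hi
      have hi' : i < j := Finset.mem_range.mp hi
      have hp : (0:ℤ) ≤ 16 ^ (i+1) := by positivity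
      calc |δ i * 16 ^ (i+1)| = |δ i| * 16 ^ (i+1) := by
            rw [abs_mul, abs_of_nonneg hp]
        _ ≤ 2 * 16 ^ (i+1) := mul_le_mul_of_nonneg_right (hb i (by omega)) hp
    have h3 : ∑ i ∈ Finset.range j, 2 * (16:ℤ) ^ (i+1) = 2 * ∑ i ∈ Finset.range j, (16:ℤ) ^ (i+1) := by
      rw [Finset.mul_sum]
    have h4 := geo j
    nlinarith [abs_nonneg (digsum j δ)]

lemma exists_top (n : ℕ) (δ : ℕ → ℤ) (h : ∃ i, i < n ∧ δ i ≠ 0) :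
    ∃ j, j < n ∧ δ j ≠ 0 ∧ ∀ i, j < i → i < n → δ i = 0 := by
  classical
  set S := (Finset.range n).filter (fun i => δ i ≠ 0) with hS
  obtain ⟨i0, hi0, hi0'⟩ := h
  have hne : S.Nonempty := ⟨i0, by simp [hS, hi0, hi0']⟩
  have hmem := S.max'_mem hne
  simp only [hS, Finset.mem_filter, Finset.mem_range] at hmem
  refine ⟨S.max' hne, hmem.1, hmem.2, ?_⟩
  intro i hji hin
  by_contra hne0
  have hiS : i ∈ S := by simp [hS, hin, hne0]
  exact absurd (S.le_max' i hiS) (by omega)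

lemma digsum_ne_zero (n : ℕ) (δ : ℕ → ℤ) (hb : ∀ i < n, |δ i| ≤ 2)
    (hex : ∃ i, i < n ∧ δ i ≠ 0) : digsum n δ ≠ 0 := by
  obtain ⟨j, hj, hj0, htop⟩ := exists_top n δ hex
  obtain ⟨heq, hsmall⟩ := core n j δ hb hj htop
  intro h0
  have hpow : (0:ℤ) < 16 ^ (j+1) := by positivity
  have h1 : 15 * digsum j δ ≤ 2 * 16 ^ (j+1) := by nlinarith [le_abs_self (digsum j δ)]
  have h2 : -(2 * 16 ^ (j+1)) ≤ 15 * digsum j δ := by nlinarith [neg_abs_le (digsum j δ)]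
  have h15 : 15 * digsum n δ = 15 * (δ j * 16 ^ (j+1)) + 15 * digsum j δ := by rw [heq]; ring
  rcases (by omega : 1 ≤ δ j ∨ δ j ≤ -1) with h | h
  · have hm : 1 * 16 ^ (j+1) ≤ δ j * 16 ^ (j+1) := mul_le_mul_of_nonneg_right h hpow.le
    rw [h0] at h15; linarith
  · have hm : δ j * 16 ^ (j+1) ≤ (-1) * 16 ^ (j+1) := mul_le_mul_of_nonneg_right h hpow.le
    rw [h0] at h15; linarith

lemma scale_bounds (n : ℕ) (δ : ℕ → ℤ) (hb : ∀ i < n, |δ i| ≤ 2)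
    (hpos : 0 < digsum n δ) :
    ∃ j, j < n ∧ 1 ≤ δ j ∧ (∀ i, j < i → i < n → δ i = 0) ∧
      13 * 16 ^ (j+1) ≤ 15 * digsum n δ ∧ 15 * digsum n δ ≤ 32 * 16 ^ (j+1) := by
  have hex : ∃ i, i < n ∧ δ i ≠ 0 := by
    by_contra h; push_neg at h
    have : digsum n δ = 0 :=
      Finset.sum_eq_zero (fun i hi => by rw [h i (Finset.mem_range.mp hi)]; ring)
    omega
  obtain ⟨j, hj, hj0, htop⟩ := exists_top n δ hex
  obtain ⟨heq, hsmall⟩ := core n j δ hb hj htop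
  have hpow : (0:ℤ) < 16 ^ (j+1) := by positivity
  have h1 : 15 * digsum j δ ≤ 2 * 16 ^ (j+1) := by nlinarith [le_abs_self (digsum j δ)]
  have h2 : -(2 * 16 ^ (j+1)) ≤ 15 * digsum j δ := by nlinarith [neg_abs_le (digsum j δ)]
  have h15 : 15 * digsum n δ = 15 * (δ j * 16 ^ (j+1)) + 15 * digsum j δ := by rw [heq]; ring
  have hδj : 1 ≤ δ j := by
    rcases (by omega : 1 ≤ δ j ∨ δ j ≤ -1) with h | h
    · exact h
    · exfalso
      have hm : δ j * 16 ^ (j+1) ≤ (-1) * 16 ^ (j+1) := mul_le_mul_of_nonneg_right h hpow.le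
      linarith
  have hδj2 : δ j ≤ 2 := by have := abs_le.mp (hb j hj); omega
  have hml : 1 * 16 ^ (j+1) ≤ δ j * 16 ^ (j+1) := mul_le_mul_of_nonneg_right hδj hpow.le
  have hmu : δ j * 16 ^ (j+1) ≤ 2 * 16 ^ (j+1) := mul_le_mul_of_nonneg_right hδj2 hpow.le
  exact ⟨j, hj, hδj, htop, by linarith, by linarith⟩

lemma scale_lt (g g' : ℤ) (j j' : ℕ) (hj : j' < j)
    (hg1 : 13 * 16 ^ (j+1) ≤ 15 * g) (hg2' : 15 * g' ≤ 32 * 16 ^ (j'+1)) :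
    2 * g' < g := by
  have hle : (16:ℤ) ^ (j'+2) ≤ 16 ^ (j+1) := by
    apply pow_le_pow_right₀ (by norm_num) (by omega)
  have he : (16:ℤ) ^ (j'+2) = 16 * 16 ^ (j'+1) := by ring
  nlinarith [pow_pos (show (0:ℤ) < 16 by norm_num) (j'+1)]


noncomputable section

def bitf (m : ℕ) : ℕ → ℤ := fun i => if m.testBit i then 1 else 0

def Aset (n : ℕ) : Finset ℤ :=
  (Finset.range (2 ^ n)).image (fun m => 1 + digsum n (bitf m))

lemma bitf_bound (m i : ℕ) : 0 ≤ bitf m i ∧ bitf m i ≤ 1 := by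
  unfold bitf; split <;> norm_num

lemma Aset_subset (n : ℕ) : Aset n ⊆ Finset.Icc (1 : ℤ) (2 * 16 ^ n : ℤ) := by
  intro x hx
  simp only [Aset, Finset.mem_image, Finset.mem_range] at hx
  obtain ⟨m, _, rfl⟩ := hx
  have h0 : 0 ≤ digsum n (bitf m) := by
    apply Finset.sum_nonneg
    intro i _
    have := (bitf_bound m i).1
    positivity
  have h1 : digsum n (bitf m) ≤ ∑ i ∈ Finset.range n, (16:ℤ) ^ (i+1) := by
    apply Finset.sum_le_sum
    intro i _
    have hp : (0:ℤ) ≤ 16 ^ (i+1) := by positivity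
    calc bitf m i * 16 ^ (i+1) ≤ 1 * 16 ^ (i+1) :=
          mul_le_mul_of_nonneg_right (bitf_bound m i).2 hp
      _ = 16 ^ (i+1) := one_mul _
  have hg := geo n
  have hpn : (0:ℤ) < 16 ^ n := by positivity
  have h16 : (16:ℤ) ^ (n+1) = 16 * 16 ^ n := by ring
  rw [Finset.mem_Icc]
  constructor
  · linarith
  · nlinarith

lemma Aset_card (n : ℕ) : (Aset n).card = 2 ^ n := by
  rw [Aset, Finset.card_image_of_injOn, Finset.card_range]
  intro a ha b hb hab
  simp only [Finset.coe_range, Set.mem_Iio] at ha hb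
  by_contra hne
  have hbit : ∃ i, i < n ∧ bitf a i - bitf b i ≠ 0 := by
    by_contra h; push_neg at h
    apply hne
    apply Nat.eq_of_testBit_eq
    intro i
    rcases lt_or_ge i n with hi | hi
    · have := h i hi
      unfold bitf at this
      by_cases h1 : a.testBit i <;> by_cases h2 : b.testBit i <;>
        simp [h1, h2] at this ⊢
    · have h2n : 2 ^ n ≤ 2 ^ i := Nat.pow_le_pow_right (by norm_num) hi
      rw [Nat.testBit_eq_false_of_lt (by omega), Nat.testBit_eq_false_of_lt (by omega)]
  have hab' : digsum n (bitf a) = digsum n (bitf b) := by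
    have : (1:ℤ) + digsum n (bitf a) = 1 + digsum n (bitf b) := hab
    omega
  have hzero : digsum n (fun i => bitf a i - bitf b i) = 0 := by
    rw [← digsum_sub, hab', sub_self]
  refine digsum_ne_zero n _ ?_ hbit hzero
  intro i _
  have h1 := bitf_bound a i
  have h2 := bitf_bound b i
  show |bitf a i - bitf b i| ≤ 2
  rw [abs_le]; constructor <;> omega

lemma rep (n : ℕ) (x : ℤ) (hx : x ∈ Aset n - Aset n) :
    ∃ δ : ℕ → ℤ, (∀ i, |δ i| ≤ 1) ∧ x = digsum n δ := by
  rw [Finset.mem_sub] at hx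
  obtain ⟨y, hy, z, hz, rfl⟩ := hx
  simp only [Aset, Finset.mem_image, Finset.mem_range] at hy hz
  obtain ⟨a, _, rfl⟩ := hy
  obtain ⟨b, _, rfl⟩ := hz
  refine ⟨fun i => bitf a i - bitf b i, ?_, ?_⟩
  · intro i
    have h1 := bitf_bound a i
    have h2 := bitf_bound b i
    show |bitf a i - bitf b i| ≤ 1
    rw [abs_le]; constructor <;> omega
  · rw [← digsum_sub]; ring

lemma consecIn_orderIso (B : Finset ℤ) {m : ℕ} (h : B.card = m) (k : ℕ) (hk : k + 1 < m) :
    ConsecIn B (B.orderIsoOfFin h ⟨k, by omega⟩ : ℤ) (B.orderIsoOfFin h ⟨k+1, hk⟩ : ℤ) := by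
  set e := B.orderIsoOfFin h with he
  refine ⟨(e ⟨k, by omega⟩).2, (e ⟨k+1, hk⟩).2, ?_, ?_⟩
  · rw [Subtype.coe_lt_coe, OrderIso.lt_iff_lt]
    simp [Fin.lt_def]
  · intro c hc
    by_contra hcon
    push_neg at hcon
    obtain ⟨h1, h2⟩ := hcon
    set i := e.symm ⟨c, hc⟩ with hi
    have hc' : (⟨c, hc⟩ : {x // x ∈ B}) = e i := by simp [hi]
    have hlt1 : e ⟨k, by omega⟩ < e i := by
      rw [← Subtype.coe_lt_coe, ← hc']; exact h1
    have hlt2 : e i < e ⟨k+1, hk⟩ := by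
      rw [← Subtype.coe_lt_coe, ← hc']; exact h2
    rw [OrderIso.lt_iff_lt] at hlt1 hlt2
    simp only [Fin.lt_def] at hlt1 hlt2
    omega

lemma gap_scale (n : ℕ) (δ1 δ2 : ℕ → ℤ) (h1 : ∀ i, |δ1 i| ≤ 1) (h2 : ∀ i, |δ2 i| ≤ 1)
    (hlt : digsum n δ1 < digsum n δ2) :
    ∃ j, j < n ∧ 1 ≤ δ2 j - δ1 j ∧ (∀ i, j < i → i < n → δ2 i - δ1 i = 0) ∧
      13 * 16 ^ (j+1) ≤ 15 * (digsum n δ2 - digsum n δ1) ∧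
      15 * (digsum n δ2 - digsum n δ1) ≤ 32 * 16 ^ (j+1) := by
  have hb : ∀ i < n, |δ2 i - δ1 i| ≤ 2 := by
    intro i _
    have := abs_le.mp (h1 i); have := abs_le.mp (h2 i)
    rw [abs_le]; constructor <;> omega
  have hpos : 0 < digsum n (fun i => δ2 i - δ1 i) := by
    rw [← digsum_sub]; omega
  obtain ⟨j, hj, hj1, htop, hl, hu⟩ := scale_bounds n _ hb hpos
  rw [← digsum_sub] at hl hu
  exact ⟨j, hj, hj1, htop, hl, hu⟩

lemma digsum_top_zero (n : ℕ) (hn : 0 < n) (η : ℕ → ℤ)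
    (h : ∀ i, 0 < i → i < n → η i = 0) : digsum n η = η 0 * 16 := by
  unfold digsum
  rw [Finset.sum_eq_single_of_mem 0 (Finset.mem_range.2 hn)]
  · norm_num
  · intro i hi hne
    rw [h i (by omega) (Finset.mem_range.mp hi)]; ring

lemma setup (n : ℕ) (B : Finset ℤ) (hBsub : B ⊆ Aset n - Aset n) :
    ∃ (b : ℕ → ℤ) (δ : ℕ → ℕ → ℤ) (J : ℕ → ℕ),
      (∀ k, k + 1 < B.card → ConsecIn B (b k) (b (k+1))) ∧
      (∀ k, k < B.card → (∀ i, |δ k i| ≤ 1) ∧ b k = digsum n (δ k)) ∧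
      (∀ k, k + 1 < B.card → J k < n ∧ 1 ≤ δ (k+1) (J k) - δ k (J k) ∧
        (∀ i, J k < i → i < n → δ (k+1) i - δ k i = 0) ∧
        13 * 16 ^ (J k + 1) ≤ 15 * (b (k+1) - b k) ∧
        15 * (b (k+1) - b k) ≤ 32 * 16 ^ (J k + 1)) := by
  classical
  set e := B.orderIsoOfFin rfl with he
  set b : ℕ → ℤ := fun k => if h : k < B.card then (e ⟨k, h⟩ : ℤ) else 0 with hb
  have hbk : ∀ k (h : k < B.card), b k = (e ⟨k, h⟩ : ℤ) := by
    intro k h; simp [hb, dif_pos h]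
  have hcons : ∀ k, k + 1 < B.card → ConsecIn B (b k) (b (k+1)) := by
    intro k hk
    rw [hbk k (by omega), hbk (k+1) hk]
    exact consecIn_orderIso B rfl k hk
  have hmem : ∀ k, k < B.card → b k ∈ Aset n - Aset n := by
    intro k h
    rw [hbk k h]
    exact hBsub (e ⟨k, h⟩).2
  have hrep : ∀ k : ℕ, ∃ δ : ℕ → ℤ, k < B.card → ((∀ i, |δ i| ≤ 1) ∧ b k = digsum n δ) := by
    intro k
    by_cases h : k < B.card
    · obtain ⟨δ, h1, h2⟩ := rep n (b k) (hmem k h)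
      exact ⟨δ, fun _ => ⟨h1, h2⟩⟩
    · exact ⟨fun _ => 0, fun hk => absurd hk h⟩
  choose δ hδ using hrep
  have hJ : ∀ k : ℕ, ∃ J : ℕ, k + 1 < B.card → (J < n ∧ 1 ≤ δ (k+1) J - δ k J ∧
      (∀ i, J < i → i < n → δ (k+1) i - δ k i = 0) ∧
      13 * 16 ^ (J + 1) ≤ 15 * (b (k+1) - b k) ∧
      15 * (b (k+1) - b k) ≤ 32 * 16 ^ (J + 1)) := by
    intro k
    by_cases h : k + 1 < B.card
    · have h1 := hδ k (by omega)
      have h2 := hδ (k+1) h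
      have hlt : digsum n (δ k) < digsum n (δ (k+1)) := by
        rw [← h1.2, ← h2.2]
        exact (hcons k h).2.2.1
      obtain ⟨J, hJn, hJ1, hJtop, hJl, hJu⟩ := gap_scale n (δ k) (δ (k+1)) h1.1 h2.1 hlt
      rw [← h1.2, ← h2.2] at hJl hJu
      exact ⟨J, fun _ => ⟨hJn, hJ1, hJtop, hJl, hJu⟩⟩
    · exact ⟨0, fun hk => absurd hk h⟩
  choose J hJ using hJ
  exact ⟨b, δ, J, hcons, hδ, hJ⟩

lemma regMax_le (n : ℕ) (hn : 0 < n) : regMax 2 (Aset n - Aset n) ≤ 3 := by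
  classical
  apply Finset.sup_le
  intro B hB
  rw [Finset.mem_filter, Finset.mem_powerset] at hB
  obtain ⟨hBsub, X, hX, hreg⟩ := hB
  by_contra hcard
  push_neg at hcard
  obtain ⟨b, δ, J, hcons, hδ, hJ⟩ := setup n B hBsub
  have hratio : ∀ k l, k + 1 < B.card → l + 1 < B.card →
      b (k+1) - b k ≤ 2 * (b (l+1) - b l) := by
    intro k l hk hl
    have h1 := hreg (b k) (b (k+1)) (hcons k hk)
    have h2 := hreg (b l) (b (l+1)) (hcons l hl)
    have : ((b (k+1) - b k : ℤ) : ℝ) ≤ 2 * ((b (l+1) - b l : ℤ) : ℝ) := by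
      push_cast; linarith
    exact_mod_cast this
  have hJle : ∀ k l, k + 1 < B.card → l + 1 < B.card → J k ≤ J l := by
    intro k l hk hl
    by_contra hlt
    push_neg at hlt
    have h1 := scale_lt (b (k+1) - b k) (b (l+1) - b l) (J k) (J l) hlt
      (hJ k hk).2.2.2.1 (hJ l hl).2.2.2.2
    have h2 := hratio k l hk hl
    omega
  have h01 : J 1 = J 0 := le_antisymm (hJle 1 0 (by omega) (by omega)) (hJle 0 1 (by omega) (by omega))
  have h02 : J 2 = J 0 := le_antisymm (hJle 2 0 (by omega) (by omega)) (hJle 0 2 (by omega) (by omega))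
  have hd1 := (hJ 0 (by omega)).2.1
  have hd2 := (hJ 1 (by omega)).2.1
  have hd3 := (hJ 2 (by omega)).2.1
  rw [h01] at hd2
  rw [h02] at hd3
  norm_num at hd1 hd2 hd3
  have ha0 := abs_le.mp ((hδ 0 (by omega)).1 (J 0))
  have ha3 := abs_le.mp ((hδ 3 (by omega)).1 (J 0))
  omega

lemma convMax_le (n : ℕ) (hn : 0 < n) : convMax (Aset n - Aset n) ≤ 2 * n := by
  classical
  apply Finset.sup_le
  intro B hB
  rw [Finset.mem_filter, Finset.mem_powerset] at hB
  obtain ⟨hBsub, hconv⟩ := hB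
  by_contra hcard
  push_neg at hcard
  have hm : 2 * n + 1 ≤ B.card := hcard
  obtain ⟨b, δ, J, hcons, hδ, hJ⟩ := setup n B hBsub
  have hgap : ∀ k, k + 2 < B.card → b (k+1) - b k < b (k+2) - b (k+1) := by
    intro k h
    have h1 := hcons k (by omega)
    have h2 := hcons (k+1) (by omega)
    have : k + 1 + 1 = k + 2 := by omega
    rw [this] at h2
    exact hconv _ _ _ h1 h2
  have hpos : ∀ k, k + 1 < B.card → 0 < b (k+1) - b k := by
    intro k h
    have := (hcons k h).2.2.1
    omega
  have hmono : ∀ k, k + 2 < B.card → J k ≤ J (k+1) := by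
    intro k h
    by_contra hlt
    push_neg at hlt
    have hu := (hJ (k+1) (by omega)).2.2.2.2
    have h3 := hpos (k+1) (by omega)
    have e0 : k + 1 + 1 = k + 2 := by omega
    rw [e0] at hu h3
    have h1 := scale_lt (b (k+1) - b k) (b (k+2) - b (k+1)) (J k) (J (k+1)) hlt
      (hJ k (by omega)).2.2.2.1 hu
    have h2 := hgap k h
    omega
  have hthree : ∀ k, k + 3 < B.card → ¬(J k = J (k+1) ∧ J (k+1) = J (k+2)) := by
    rintro k h ⟨e1, e2⟩
    have hd1 := (hJ k (by omega)).2.1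
    have hd2 := (hJ (k+1) (by omega)).2.1
    have hd3 := (hJ (k+2) (by omega)).2.1
    rw [← e1] at hd2
    rw [← e2, ← e1] at hd3
    have ha0 := abs_le.mp ((hδ k (by omega)).1 (J k))
    have ha3 := abs_le.mp ((hδ (k+3) (by omega)).1 (J k))
    have h21 : k + 1 + 1 = k + 2 := by omega
    have h32 : k + 2 + 1 = k + 3 := by omega
    rw [h21] at hd2
    rw [h32] at hd3
    omega
  have hzero : ∀ k, k + 2 < B.card → ¬(J k = 0 ∧ J (k+1) = 0) := by
    rintro k h ⟨e1, e2⟩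
    have hg1 : b (k+1) - b k = (δ (k+1) 0 - δ k 0) * 16 := by
      have h1 := (hδ k (by omega)).2
      have h2 := (hδ (k+1) (by omega)).2
      have htop := (hJ k (by omega)).2.2.1
      rw [e1] at htop
      rw [h1, h2, digsum_sub n (δ (k+1)) (δ k),
        digsum_top_zero n hn _ (fun i hi hin => htop i hi hin)]
    have hg2 : b (k+2) - b (k+1) = (δ (k+2) 0 - δ (k+1) 0) * 16 := by
      have h1 := (hδ (k+1) (by omega)).2
      have h2 := (hδ (k+2) (by omega)).2
      have htop := (hJ (k+1) (by omega)).2.2.1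
      rw [e2] at htop
      have h21 : k + 1 + 1 = k + 2 := by omega
      rw [h21] at htop
      rw [h1, h2, digsum_sub n (δ (k+2)) (δ (k+1)),
        digsum_top_zero n hn _ (fun i hi hin => htop i hi hin)]
    have hd1 := (hJ k (by omega)).2.1
    have hd2 := (hJ (k+1) (by omega)).2.1
    rw [e1] at hd1
    rw [e2] at hd2
    have h21 : k + 1 + 1 = k + 2 := by omega
    rw [h21] at hd2
    have ha0 := abs_le.mp ((hδ k (by omega)).1 0)
    have ha2 := abs_le.mp ((hδ (k+2) (by omega)).1 0)
    have hgl := hgap k h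
    omega
  have hstep : ∀ t, 2 + 2 * t < B.card → 1 + t ≤ J (1 + 2 * t) := by
    intro t
    induction t with
    | zero =>
      intro h
      norm_num at h ⊢
      by_contra h0
      push_neg at h0
      have hJ1 : J 1 = 0 := by omega
      have hJ0 : J 0 = 0 := by
        have hm0 := hmono 0 (by omega)
        norm_num at hm0
        omega
      exact hzero 0 (by omega) ⟨hJ0, hJ1⟩
    | succ t ih =>
      intro h
      have h1 := ih (by omega)
      have h2 := hmono (1 + 2 * t) (by omega)
      have h3 := hmono (2 + 2 * t) (by omega)
      have h4 := hthree (1 + 2 * t) (by omega)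
      have e1 : 1 + 2 * t + 1 = 2 + 2 * t := by omega
      have e2 : 2 + 2 * t + 1 = 1 + 2 * (t + 1) := by omega
      have e3 : 1 + 2 * t + 2 = 1 + 2 * (t+1) := by omega
      rw [e1] at h2
      rw [e2] at h3
      rw [e1, e3] at h4
      omega
  have hfin := hstep (n - 1) (by omega)
  have hJn := (hJ (1 + 2 * (n - 1)) (by omega)).1
  omega

end
end Stmt12Aux

/-- For every positive integer `n`, there is a set `A ⊆ {1, …, 2·16^n}` with
`|A| = 2^n`, `R_2(A − A) ≤ 3`, and `C(A − A) ≤ 2n`. -/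
theorem stmt12 (n : ℕ) (hn : 0 < n) :
    ∃ A : Finset ℤ, A ⊆ Finset.Icc (1 : ℤ) (2 * 16 ^ n : ℤ) ∧
      A.card = 2 ^ n ∧ regMax 2 (A - A) ≤ 3 ∧ convMax (A - A) ≤ 2 * n := by
  exact ⟨Stmt12Aux.Aset n, Stmt12Aux.Aset_subset n, Stmt12Aux.Aset_card n,
    Stmt12Aux.regMax_le n hn, Stmt12Aux.convMax_le n hn⟩
end
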